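/- Let $b \ge 1$ and let $J$ be the $b \times b$ tridiagonal matrix with diagonal entries $J_{kk} = -2\lambda s_k - 1$, superdiagonal entries $J_{k,k+1} = 1$, and subdiagonal entries $J_{k+1,k} = 2\lambda s_k$, where $\lambda > 0$ and $s_1, \dots, s_b \ge 0$. Define $P_i$ to be the determinant of the top-left $i \times i$ submatrix (with $P_0 = 1$). Then $P_i = (-1)^i - 2\lambda s_i P_{i-1}$ for all $1 \le i \le b$. -/

import Mathlib

/-- Tridiagonal determinant identity for the Po2 Jacobian:
`P i = (-1)^i - 2 λ s_i P_{i-1}` where `P i` is the top-left `i × i` minor. -/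
theorem stmt0 (b : ℕ) (hb : 1 ≤ b) (lam : ℝ) (hlam : 0 < lam)
    (s : ℕ → ℝ) (hs : ∀ k, 1 ≤ k → k ≤ b → 0 ≤ s k)
    (J : Matrix ℕ ℕ ℝ)
    (hJ : ∀ i j, J i j =
      if i = j then -2 * lam * s (i + 1) - 1
      else if j = i + 1 then 1
      else if i = j + 1 then 2 * lam * s (j + 1)
      else 0)
    (P : ℕ → ℝ)
    (hP : ∀ i, i ≤ b → P i = Matrix.det (fun k l : Fin i => J k.val l.val)) :
    ∀ i, 1 ≤ i → i ≤ b → P i = (-1 : ℝ) ^ i - 2 * lam * s i * P (i - 1) := by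
  set D : ℕ → ℝ := fun n => Matrix.det (fun k l : Fin n => J k.val l.val) with hD
  have hD0 : D 0 = 1 := Matrix.det_fin_zero
  have hD1 : D 1 = -2 * lam * s 1 - 1 := by
    show Matrix.det (fun k l : Fin 1 => J k.val l.val) = _
    refine (Matrix.det_fin_one (fun k l : Fin 1 => J k.val l.val)).trans ?_
    simp [hJ]
  have hrec : ∀ n, D (n + 2)
      = (-2 * lam * s (n + 2) - 1) * D (n + 1) - 2 * lam * s (n + 1) * D n := by
    intro n
    have hA : D (n + 2) = Matrix.det (fun k l : Fin (n + 2) => J k.val l.val) := rfl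
    set A : Matrix (Fin (n + 2)) (Fin (n + 2)) ℝ := fun k l => J k.val l.val with hAdef
    rw [hA, Matrix.det_succ_row A (Fin.last (n + 1)), Fin.sum_univ_castSucc,
      Fintype.sum_eq_single (Fin.last n)]
    · -- two surviving terms
      have h1 : A (Fin.last (n + 1)) (Fin.castSucc (Fin.last n)) = 2 * lam * s (n + 1) := by
        show J (n + 1) n = _
        rw [hJ, if_neg (by omega), if_neg (by omega), if_pos rfl]
      have h2 : A (Fin.last (n + 1)) (Fin.last (n + 1)) = -2 * lam * s (n + 2) - 1 := by
        show J (n + 1) (n + 1) = _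
        rw [hJ, if_pos rfl]
      have hsub2 : (A.submatrix (Fin.last (n + 1)).succAbove (Fin.last (n + 1)).succAbove).det
          = D (n + 1) := by
        rw [Fin.succAbove_last]
        rfl
      have hsub1 : (A.submatrix (Fin.last (n + 1)).succAbove
          (Fin.castSucc (Fin.last n)).succAbove).det = D n := by
        rw [Matrix.det_succ_column _ (Fin.last n), Fintype.sum_eq_single (Fin.last n)]
        · have hcol : (Fin.castSucc (Fin.last n)).succAbove (Fin.last n)
              = Fin.succ (Fin.last n) :=
            Fin.succAbove_castSucc_of_le _ _ (le_refl _)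
          simp only [Matrix.submatrix_apply, Matrix.submatrix_submatrix,
            Fin.succAbove_last, hcol]
          have hBll : A (Fin.castSucc (Fin.last n)) (Fin.succ (Fin.last n)) = 1 := by
            show J n (n + 1) = 1
            rw [hJ, if_neg (by omega), if_pos rfl]
          rw [hBll]
          have hmat : A.submatrix ((Fin.castSucc ∘ Fin.castSucc : Fin n → Fin (n+2)))
              ((Fin.castSucc (Fin.last n)).succAbove ∘ Fin.castSucc)
              = fun k l : Fin n => J k.val l.val := by
            funext k l
            simp only [Matrix.submatrix_apply, Function.comp_apply, Fin.succAbove_last,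
              Fin.succAbove_castSucc_of_lt _ _ (Fin.castSucc_lt_last l)]
            rfl
          rw [hmat]
          have hsign : ((-1 : ℝ)) ^ ((Fin.last n : ℕ) + (Fin.last n : ℕ)) = 1 := by
            rw [← two_mul, pow_mul]
            norm_num
          rw [hsign, one_mul, one_mul]
        · intro k hk
          have hk' : (k : ℕ) < n := lt_of_le_of_ne (Nat.lt_succ_iff.mp k.isLt)
            (fun h => hk (Fin.ext h))
          have hcol : (Fin.castSucc (Fin.last n)).succAbove (Fin.last n)
              = Fin.succ (Fin.last n) :=
            Fin.succAbove_castSucc_of_le _ _ (le_refl _)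
          have hz : (A.submatrix (Fin.last (n + 1)).succAbove
              (Fin.castSucc (Fin.last n)).succAbove) k (Fin.last n) = 0 := by
            simp only [Matrix.submatrix_apply, Fin.succAbove_last, hcol]
            show J (k : ℕ) (n + 1) = 0
            rw [hJ, if_neg (by omega), if_neg (by omega), if_neg (by omega)]
          rw [hz]
          ring
      rw [h1, h2, hsub1, hsub2]
      have hc1 : ((Fin.castSucc (Fin.last n) : Fin (n + 2)) : ℕ) = n := rfl
      have hc2 : ((Fin.last (n + 1) : Fin (n + 2)) : ℕ) = n + 1 := rfl
      rw [hc1, hc2]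
      have hs1 : ((-1 : ℝ)) ^ (n + 1 + n) = -1 := by
        have h : n + 1 + n = 2 * n + 1 := by ring
        rw [h, pow_succ, pow_mul]
        norm_num
      have hs2 : ((-1 : ℝ)) ^ (n + 1 + (n + 1)) = 1 := by
        have h : n + 1 + (n + 1) = 2 * (n + 1) := by ring
        rw [h, pow_mul]
        norm_num
      rw [hs1, hs2]
      ring
    · intro j hj
      have hj' : (j : ℕ) < n := lt_of_le_of_ne (Nat.lt_succ_iff.mp j.isLt)
        (fun h => hj (Fin.ext h))
      have hz : A (Fin.last (n + 1)) (Fin.castSucc j) = 0 := by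
        show J (n + 1) (j : ℕ) = 0
        rw [hJ, if_neg (by omega), if_neg (by omega), if_neg (by omega)]
      rw [hz]
      ring
  have key : ∀ n, D (n + 1) = (-1 : ℝ) ^ (n + 1) - 2 * lam * s (n + 1) * D n := by
    intro n
    induction n with
    | zero => rw [hD1, hD0]; ring
    | succ m ih => rw [hrec m, ih]; ring
  intro i hi1 hib
  obtain ⟨n, rfl⟩ : ∃ n, i = n + 1 := ⟨i - 1, (Nat.succ_pred_eq_of_pos hi1).symm⟩
  rw [hP _ hib, hP _ (le_trans (Nat.sub_le _ _) hib)]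
  simpa using key n
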